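/- arXiv:math/0410610 — 2 statements merged into one kernel-verified Lean document; each statement's English description precedes it below -/
import Mathlib

section
/- On ℝ⁶ with the standard SU(3)-structure forms, let u(3)^⊥ denote the space of alternating 2-forms β on ℝ⁶ satisfying β(Ix, Iy) = −β(x, y) for all x, y. Then the following three subsets of the space of alternating 4-forms on ℝ⁶ coincide: {μ ∧ ψ₊ : μ an ℝ-linear 1-form}, {μ ∧ ψ₋ : μ an ℝ-linear 1-form}, and {β ∧ ω : β ∈ u(3)^⊥}. -/
open scoped BigOperators

noncomputable section

/-- ℝ⁶ as the space of functions `Fin 6 → ℝ`. -/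
abbrev V6 : Type := Fin 6 → ℝ

/-- The standard inner product on ℝ⁶. -/
def ip6 (x y : V6) : ℝ := ∑ i, x i * y i

/-- The standard orthonormal basis vector `e_i`. -/
def e6 (i : Fin 6) : V6 := fun j => if j = i then 1 else 0

/-- The orthogonal complex structure: `I e_k = e_{k+3}`, `I e_{k+3} = -e_k` (0-indexed). -/
def I6 (x : V6) : V6 := fun j => if (j : ℕ) < 3 then -x (j + 3) else x (j + 3)

/-- The Kähler form `ω(x,y) = ⟨x, I y⟩`. -/
def ω6 (x y : V6) : ℝ := ip6 x (I6 y)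

/-- The basis covector `eⁱ`. -/
def E (i : Fin 6) : V6 → ℝ := fun x => x i

/-- Wedge product of three covectors (determinant convention). -/
def w3 (a b c : V6 → ℝ) (x y z : V6) : ℝ :=
  a x * b y * c z - a x * b z * c y - a y * b x * c z
    + a y * b z * c x + a z * b x * c y - a z * b y * c x

/-- `ψ₊ = e¹∧e²∧e³ − e⁴∧e⁵∧e³ − e⁴∧e²∧e⁶ − e¹∧e⁵∧e⁶` (0-indexed). -/
def ψp (x y z : V6) : ℝ :=
  w3 (E 0) (E 1) (E 2) x y z - w3 (E 3) (E 4) (E 2) x y z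
    - w3 (E 3) (E 1) (E 5) x y z - w3 (E 0) (E 4) (E 5) x y z

/-- `ψ₋ = −e⁴∧e⁵∧e⁶ + e⁴∧e²∧e³ + e¹∧e⁵∧e³ + e¹∧e²∧e⁶` (0-indexed). -/
def ψm (x y z : V6) : ℝ :=
  -w3 (E 3) (E 4) (E 5) x y z + w3 (E 3) (E 1) (E 2) x y z
    + w3 (E 0) (E 4) (E 2) x y z + w3 (E 0) (E 1) (E 5) x y z

/-- `u(3)^⊥`: alternating 2-forms `β` with `β(Ix,Iy) = −β(x,y)`. -/
def u3perp : Set (AlternatingMap ℝ V6 ℝ (Fin 2)) :=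
  {β | ∀ x y : V6, β ![I6 x, I6 y] = -β ![x, y]}

/-- Wedge product of a 1-form and a 3-form, as an alternating 4-form. -/
def w13 (μ : V6 → ℝ) (α : V6 → V6 → V6 → ℝ) (v : Fin 4 → V6) : ℝ :=
  (1 / 6 : ℝ) * ∑ σ : Equiv.Perm (Fin 4),
    ((Equiv.Perm.sign σ : ℤ) : ℝ) *
      (μ (v (σ 0)) * α (v (σ 1)) (v (σ 2)) (v (σ 3)))

/-- Wedge product of two 2-forms, as an alternating 4-form. -/
def w22 (β γ : V6 → V6 → ℝ) (v : Fin 4 → V6) : ℝ :=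
  (1 / 4 : ℝ) * ∑ σ : Equiv.Perm (Fin 4),
    ((Equiv.Perm.sign σ : ℤ) : ℝ) *
      (β (v (σ 0)) (v (σ 1)) * γ (v (σ 2)) (v (σ 3)))


def pN (n : ℕ) : Equiv.Perm (Fin 4) :=
  ([⟨![0,1,2,3], ![0,1,2,3], by decide, by decide⟩,
    ⟨![0,1,3,2], ![0,1,3,2], by decide, by decide⟩,
    ⟨![0,2,1,3], ![0,2,1,3], by decide, by decide⟩,
    ⟨![0,2,3,1], ![0,3,1,2], by decide, by decide⟩,
    ⟨![0,3,1,2], ![0,2,3,1], by decide, by decide⟩,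
    ⟨![0,3,2,1], ![0,3,2,1], by decide, by decide⟩,
    ⟨![1,0,2,3], ![1,0,2,3], by decide, by decide⟩,
    ⟨![1,0,3,2], ![1,0,3,2], by decide, by decide⟩,
    ⟨![1,2,0,3], ![2,0,1,3], by decide, by decide⟩,
    ⟨![1,2,3,0], ![3,0,1,2], by decide, by decide⟩,
    ⟨![1,3,0,2], ![2,0,3,1], by decide, by decide⟩,
    ⟨![1,3,2,0], ![3,0,2,1], by decide, by decide⟩,
    ⟨![2,0,1,3], ![1,2,0,3], by decide, by decide⟩,
    ⟨![2,0,3,1], ![1,3,0,2], by decide, by decide⟩,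
    ⟨![2,1,0,3], ![2,1,0,3], by decide, by decide⟩,
    ⟨![2,1,3,0], ![3,1,0,2], by decide, by decide⟩,
    ⟨![2,3,0,1], ![2,3,0,1], by decide, by decide⟩,
    ⟨![2,3,1,0], ![3,2,0,1], by decide, by decide⟩,
    ⟨![3,0,1,2], ![1,2,3,0], by decide, by decide⟩,
    ⟨![3,0,2,1], ![1,3,2,0], by decide, by decide⟩,
    ⟨![3,1,0,2], ![2,1,3,0], by decide, by decide⟩,
    ⟨![3,1,2,0], ![3,1,2,0], by decide, by decide⟩,
    ⟨![3,2,0,1], ![2,3,1,0], by decide, by decide⟩,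
    ⟨![3,2,1,0], ![3,2,1,0], by decide, by decide⟩] : List (Equiv.Perm (Fin 4))).getD n 1

lemma pN_bij : Function.Bijective (fun i : Fin 24 => pN i.val) := by decide

lemma spN0 : Equiv.Perm.sign (pN 0) = 1 := by decide
lemma apN0_0 : pN 0 0 = 0 := by decide
lemma apN0_1 : pN 0 1 = 1 := by decide
lemma apN0_2 : pN 0 2 = 2 := by decide
lemma apN0_3 : pN 0 3 = 3 := by decide
lemma spN1 : Equiv.Perm.sign (pN 1) = -1 := by decide
lemma apN1_0 : pN 1 0 = 0 := by decide
lemma apN1_1 : pN 1 1 = 1 := by decide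
lemma apN1_2 : pN 1 2 = 3 := by decide
lemma apN1_3 : pN 1 3 = 2 := by decide
lemma spN2 : Equiv.Perm.sign (pN 2) = -1 := by decide
lemma apN2_0 : pN 2 0 = 0 := by decide
lemma apN2_1 : pN 2 1 = 2 := by decide
lemma apN2_2 : pN 2 2 = 1 := by decide
lemma apN2_3 : pN 2 3 = 3 := by decide
lemma spN3 : Equiv.Perm.sign (pN 3) = 1 := by decide
lemma apN3_0 : pN 3 0 = 0 := by decide
lemma apN3_1 : pN 3 1 = 2 := by decide
lemma apN3_2 : pN 3 2 = 3 := by decide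
lemma apN3_3 : pN 3 3 = 1 := by decide
lemma spN4 : Equiv.Perm.sign (pN 4) = 1 := by decide
lemma apN4_0 : pN 4 0 = 0 := by decide
lemma apN4_1 : pN 4 1 = 3 := by decide
lemma apN4_2 : pN 4 2 = 1 := by decide
lemma apN4_3 : pN 4 3 = 2 := by decide
lemma spN5 : Equiv.Perm.sign (pN 5) = -1 := by decide
lemma apN5_0 : pN 5 0 = 0 := by decide
lemma apN5_1 : pN 5 1 = 3 := by decide
lemma apN5_2 : pN 5 2 = 2 := by decide
lemma apN5_3 : pN 5 3 = 1 := by decide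
lemma spN6 : Equiv.Perm.sign (pN 6) = -1 := by decide
lemma apN6_0 : pN 6 0 = 1 := by decide
lemma apN6_1 : pN 6 1 = 0 := by decide
lemma apN6_2 : pN 6 2 = 2 := by decide
lemma apN6_3 : pN 6 3 = 3 := by decide
lemma spN7 : Equiv.Perm.sign (pN 7) = 1 := by decide
lemma apN7_0 : pN 7 0 = 1 := by decide
lemma apN7_1 : pN 7 1 = 0 := by decide
lemma apN7_2 : pN 7 2 = 3 := by decide
lemma apN7_3 : pN 7 3 = 2 := by decide
lemma spN8 : Equiv.Perm.sign (pN 8) = 1 := by decide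
lemma apN8_0 : pN 8 0 = 1 := by decide
lemma apN8_1 : pN 8 1 = 2 := by decide
lemma apN8_2 : pN 8 2 = 0 := by decide
lemma apN8_3 : pN 8 3 = 3 := by decide
lemma spN9 : Equiv.Perm.sign (pN 9) = -1 := by decide
lemma apN9_0 : pN 9 0 = 1 := by decide
lemma apN9_1 : pN 9 1 = 2 := by decide
lemma apN9_2 : pN 9 2 = 3 := by decide
lemma apN9_3 : pN 9 3 = 0 := by decide
lemma spN10 : Equiv.Perm.sign (pN 10) = -1 := by decide
lemma apN10_0 : pN 10 0 = 1 := by decide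
lemma apN10_1 : pN 10 1 = 3 := by decide
lemma apN10_2 : pN 10 2 = 0 := by decide
lemma apN10_3 : pN 10 3 = 2 := by decide
lemma spN11 : Equiv.Perm.sign (pN 11) = 1 := by decide
lemma apN11_0 : pN 11 0 = 1 := by decide
lemma apN11_1 : pN 11 1 = 3 := by decide
lemma apN11_2 : pN 11 2 = 2 := by decide
lemma apN11_3 : pN 11 3 = 0 := by decide
lemma spN12 : Equiv.Perm.sign (pN 12) = 1 := by decide
lemma apN12_0 : pN 12 0 = 2 := by decide
lemma apN12_1 : pN 12 1 = 0 := by decide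
lemma apN12_2 : pN 12 2 = 1 := by decide
lemma apN12_3 : pN 12 3 = 3 := by decide
lemma spN13 : Equiv.Perm.sign (pN 13) = -1 := by decide
lemma apN13_0 : pN 13 0 = 2 := by decide
lemma apN13_1 : pN 13 1 = 0 := by decide
lemma apN13_2 : pN 13 2 = 3 := by decide
lemma apN13_3 : pN 13 3 = 1 := by decide
lemma spN14 : Equiv.Perm.sign (pN 14) = -1 := by decide
lemma apN14_0 : pN 14 0 = 2 := by decide
lemma apN14_1 : pN 14 1 = 1 := by decide
lemma apN14_2 : pN 14 2 = 0 := by decide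
lemma apN14_3 : pN 14 3 = 3 := by decide
lemma spN15 : Equiv.Perm.sign (pN 15) = 1 := by decide
lemma apN15_0 : pN 15 0 = 2 := by decide
lemma apN15_1 : pN 15 1 = 1 := by decide
lemma apN15_2 : pN 15 2 = 3 := by decide
lemma apN15_3 : pN 15 3 = 0 := by decide
lemma spN16 : Equiv.Perm.sign (pN 16) = 1 := by decide
lemma apN16_0 : pN 16 0 = 2 := by decide
lemma apN16_1 : pN 16 1 = 3 := by decide
lemma apN16_2 : pN 16 2 = 0 := by decide
lemma apN16_3 : pN 16 3 = 1 := by decide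
lemma spN17 : Equiv.Perm.sign (pN 17) = -1 := by decide
lemma apN17_0 : pN 17 0 = 2 := by decide
lemma apN17_1 : pN 17 1 = 3 := by decide
lemma apN17_2 : pN 17 2 = 1 := by decide
lemma apN17_3 : pN 17 3 = 0 := by decide
lemma spN18 : Equiv.Perm.sign (pN 18) = -1 := by decide
lemma apN18_0 : pN 18 0 = 3 := by decide
lemma apN18_1 : pN 18 1 = 0 := by decide
lemma apN18_2 : pN 18 2 = 1 := by decide
lemma apN18_3 : pN 18 3 = 2 := by decide
lemma spN19 : Equiv.Perm.sign (pN 19) = 1 := by decide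
lemma apN19_0 : pN 19 0 = 3 := by decide
lemma apN19_1 : pN 19 1 = 0 := by decide
lemma apN19_2 : pN 19 2 = 2 := by decide
lemma apN19_3 : pN 19 3 = 1 := by decide
lemma spN20 : Equiv.Perm.sign (pN 20) = 1 := by decide
lemma apN20_0 : pN 20 0 = 3 := by decide
lemma apN20_1 : pN 20 1 = 1 := by decide
lemma apN20_2 : pN 20 2 = 0 := by decide
lemma apN20_3 : pN 20 3 = 2 := by decide
lemma spN21 : Equiv.Perm.sign (pN 21) = -1 := by decide
lemma apN21_0 : pN 21 0 = 3 := by decide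
lemma apN21_1 : pN 21 1 = 1 := by decide
lemma apN21_2 : pN 21 2 = 2 := by decide
lemma apN21_3 : pN 21 3 = 0 := by decide
lemma spN22 : Equiv.Perm.sign (pN 22) = -1 := by decide
lemma apN22_0 : pN 22 0 = 3 := by decide
lemma apN22_1 : pN 22 1 = 2 := by decide
lemma apN22_2 : pN 22 2 = 0 := by decide
lemma apN22_3 : pN 22 3 = 1 := by decide
lemma spN23 : Equiv.Perm.sign (pN 23) = 1 := by decide
lemma apN23_0 : pN 23 0 = 3 := by decide
lemma apN23_1 : pN 23 1 = 2 := by decide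
lemma apN23_2 : pN 23 2 = 1 := by decide
lemma apN23_3 : pN 23 3 = 0 := by decide

lemma sum_perm4 (f : Equiv.Perm (Fin 4) → ℝ) :
    ∑ σ : Equiv.Perm (Fin 4), f σ = ∑ n ∈ Finset.range 24, f (pN n) := by
  rw [← Fin.sum_univ_eq_sum_range (fun n => f (pN n)) 24]
  exact (Fintype.sum_bijective _ pN_bij _ _ (fun _ => rfl)).symm


lemma I6a0 (x : V6) : I6 x 0 = -x 3 := rfl
lemma I6a1 (x : V6) : I6 x 1 = -x 4 := rfl
lemma I6a2 (x : V6) : I6 x 2 = -x 5 := rfl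
lemma I6a3 (x : V6) : I6 x 3 = x 0 := rfl
lemma I6a4 (x : V6) : I6 x 4 = x 1 := rfl
lemma I6a5 (x : V6) : I6 x 5 = x 2 := rfl

lemma I6e0 : I6 (e6 0) = e6 3 := by funext j; fin_cases j <;> simp [I6, e6]
lemma I6e1 : I6 (e6 1) = e6 4 := by funext j; fin_cases j <;> simp [I6, e6]
lemma I6e2 : I6 (e6 2) = e6 5 := by funext j; fin_cases j <;> simp [I6, e6]
lemma I6e3 : I6 (e6 3) = -e6 0 := by funext j; fin_cases j <;> simp [I6, e6]
lemma I6e4 : I6 (e6 4) = -e6 1 := by funext j; fin_cases j <;> simp [I6, e6]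
lemma I6e5 : I6 (e6 5) = -e6 2 := by funext j; fin_cases j <;> simp [I6, e6]

lemma I6_I6 (x : V6) : I6 (I6 x) = -x := by
  funext j
  fin_cases j <;> simp [I6a0, I6a1, I6a2, I6a3, I6a4, I6a5]

def ILin : V6 →ₗ[ℝ] V6 where
  toFun := I6
  map_add' x y := by
    funext j; simp only [I6, Pi.add_apply]; split <;> ring
  map_smul' c x := by
    funext j; simp only [I6, Pi.smul_apply, smul_eq_mul, RingHom.id_apply]; split <;> ring

lemma ILin_apply (x : V6) : ILin x = I6 x := rfl

lemma lin_expand (μ : V6 →ₗ[ℝ] ℝ) (x : V6) : μ x = ∑ i, x i * μ (e6 i) := by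
  rw [LinearMap.pi_apply_eq_sum_univ]
  refine Finset.sum_congr rfl fun i _ => ?_
  rw [smul_eq_mul]
  have h : (fun j => if i = j then (1:ℝ) else 0) = e6 i := by
    funext j; simp [e6, eq_comm]
  rw [h]

set_option maxHeartbeats 1000000 in
set_option maxRecDepth 4000 in
lemma w13_psip (μ : V6 → ℝ) (v : Fin 4 → V6) :
    w13 μ ψp v = μ (v 0) * ψp (v 1) (v 2) (v 3) - μ (v 1) * ψp (v 0) (v 2) (v 3)
      + μ (v 2) * ψp (v 0) (v 1) (v 3) - μ (v 3) * ψp (v 0) (v 1) (v 2) := by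
  rw [w13, sum_perm4]
  simp only [Finset.sum_range_succ, Finset.sum_range_zero]
  simp only [spN0,spN1,spN2,spN3,spN4,spN5,spN6,spN7,spN8,spN9,spN10,spN11,spN12,spN13,spN14,spN15,spN16,spN17,spN18,spN19,spN20,spN21,spN22,spN23]
  simp only [apN0_0,apN0_1,apN0_2,apN0_3,apN1_0,apN1_1,apN1_2,apN1_3,apN2_0,apN2_1,apN2_2,apN2_3,apN3_0,apN3_1,apN3_2,apN3_3,apN4_0,apN4_1,apN4_2,apN4_3,apN5_0,apN5_1,apN5_2,apN5_3,apN6_0,apN6_1,apN6_2,apN6_3,apN7_0,apN7_1,apN7_2,apN7_3,apN8_0,apN8_1,apN8_2,apN8_3,apN9_0,apN9_1,apN9_2,apN9_3,apN10_0,apN10_1,apN10_2,apN10_3,apN11_0,apN11_1,apN11_2,apN11_3,apN12_0,apN12_1,apN12_2,apN12_3,apN13_0,apN13_1,apN13_2,apN13_3,apN14_0,apN14_1,apN14_2,apN14_3,apN15_0,apN15_1,apN15_2,apN15_3,apN16_0,apN16_1,apN16_2,apN16_3,apN17_0,apN17_1,apN17_2,apN17_3,apN18_0,apN18_1,apN1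8_2,apN18_3,apN19_0,apN19_1,apN19_2,apN19_3,apN20_0,apN20_1,apN20_2,apN20_3,apN21_0,apN21_1,apN21_2,apN21_3,apN22_0,apN22_1,apN22_2,apN22_3,apN23_0,apN23_1,apN23_2,apN23_3]
  simp only [Units.val_neg, Units.val_one, Int.cast_neg, Int.cast_one]
  simp only [ψp, w3, E]
  ring

set_option maxHeartbeats 1000000 in
set_option maxRecDepth 4000 in
lemma w13_psim (μ : V6 → ℝ) (v : Fin 4 → V6) :
    w13 μ ψm v = μ (v 0) * ψm (v 1) (v 2) (v 3) - μ (v 1) * ψm (v 0) (v 2) (v 3)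
      + μ (v 2) * ψm (v 0) (v 1) (v 3) - μ (v 3) * ψm (v 0) (v 1) (v 2) := by
  rw [w13, sum_perm4]
  simp only [Finset.sum_range_succ, Finset.sum_range_zero]
  simp only [spN0,spN1,spN2,spN3,spN4,spN5,spN6,spN7,spN8,spN9,spN10,spN11,spN12,spN13,spN14,spN15,spN16,spN17,spN18,spN19,spN20,spN21,spN22,spN23]
  simp only [apN0_0,apN0_1,apN0_2,apN0_3,apN1_0,apN1_1,apN1_2,apN1_3,apN2_0,apN2_1,apN2_2,apN2_3,apN3_0,apN3_1,apN3_2,apN3_3,apN4_0,apN4_1,apN4_2,apN4_3,apN5_0,apN5_1,apN5_2,apN5_3,apN6_0,apN6_1,apN6_2,apN6_3,apN7_0,apN7_1,apN7_2,apN7_3,apN8_0,apN8_1,apN8_2,apN8_3,apN9_0,apN9_1,apN9_2,apN9_3,apN10_0,apN10_1,apN10_2,apN10_3,apN11_0,apN11_1,apN11_2,apN11_3,apN12_0,apN12_1,apN12_2,apN12_3,apN13_0,apN13_1,apN13_2,apN13_3,apN14_0,apN14_1,apN14_2,apN14_3,apN15_0,apN15_1,apN15_2,apN15_3,apN16_0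,apN16_1,apN16_2,apN16_3,apN17_0,apN17_1,apN17_2,apN17_3,apN18_0,apN18_1,apN18_2,apN18_3,apN19_0,apN19_1,apN19_2,apN19_3,apN20_0,apN20_1,apN20_2,apN20_3,apN21_0,apN21_1,apN21_2,apN21_3,apN22_0,apN22_1,apN22_2,apN22_3,apN23_0,apN23_1,apN23_2,apN23_3]
  simp only [Units.val_neg, Units.val_one, Int.cast_neg, Int.cast_one]
  simp only [ψm, w3, E]
  ring

set_option maxHeartbeats 1000000 in
set_option maxRecDepth 4000 in
lemma w22_pairs (B C : V6 → V6 → ℝ) (hB : ∀ x y, B x y = -B y x)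
    (hC : ∀ x y, C x y = -C y x) (v : Fin 4 → V6) :
    w22 B C v = B (v 0) (v 1) * C (v 2) (v 3) - B (v 0) (v 2) * C (v 1) (v 3)
      + B (v 0) (v 3) * C (v 1) (v 2) + B (v 1) (v 2) * C (v 0) (v 3)
      - B (v 1) (v 3) * C (v 0) (v 2) + B (v 2) (v 3) * C (v 0) (v 1) := by
  rw [w22, sum_perm4]
  simp only [Finset.sum_range_succ, Finset.sum_range_zero]
  simp only [spN0,spN1,spN2,spN3,spN4,spN5,spN6,spN7,spN8,spN9,spN10,spN11,spN12,spN13,spN14,spN15,spN16,spN17,spN18,spN19,spN20,spN21,spN22,spN23]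
  simp only [apN0_0,apN0_1,apN0_2,apN0_3,apN1_0,apN1_1,apN1_2,apN1_3,apN2_0,apN2_1,apN2_2,apN2_3,apN3_0,apN3_1,apN3_2,apN3_3,apN4_0,apN4_1,apN4_2,apN4_3,apN5_0,apN5_1,apN5_2,apN5_3,apN6_0,apN6_1,apN6_2,apN6_3,apN7_0,apN7_1,apN7_2,apN7_3,apN8_0,apN8_1,apN8_2,apN8_3,apN9_0,apN9_1,apN9_2,apN9_3,apN10_0,apN10_1,apN10_2,apN10_3,apN11_0,apN11_1,apN11_2,apN11_3,apN12_0,apN12_1,apN12_2,apN12_3,apN13_0,apN13_1,apN13_2,apN13_3,apN14_0,apN14_1,apN14_2,apN14_3,apN15_0,apN15_1,apN15_2,apN15_3,apN16_0,apN16_1,apN16_2,apN16_3,apN17_0,apN17_1,apN17_2,apN17_3,apN18_0,apN18_1,apN18_2,apN18_3,apN19_0,apN19_1,apN19_2,apN19_3,apN20_0,apN20_1,apN20_2,apN20_3,apN21_0,apN21_1,apN21_2,apN21_3,apN22_0,apN22_1,apN22_2,apN22_3,apN23_0,apN23_1,apN23_2,apN23_3]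
  simp only [Units.val_neg, Units.val_one, Int.cast_neg, Int.cast_one]
  rw [hB (v 1) (v 0), hB (v 2) (v 0), hB (v 3) (v 0), hB (v 2) (v 1), hB (v 3) (v 1),
    hB (v 3) (v 2), hC (v 1) (v 0), hC (v 2) (v 0), hC (v 3) (v 0), hC (v 2) (v 1),
    hC (v 3) (v 1), hC (v 3) (v 2)]
  ring

set_option maxHeartbeats 1000000 in
set_option maxRecDepth 4000 in
lemma ID1 (μ ν : V6 →ₗ[ℝ] ℝ) (hν : ∀ x, ν x = μ (I6 x)) : w13 ⇑ν ψp = w13 ⇑μ ψm := by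
  funext v
  rw [w13_psip, w13_psim, hν (v 0), hν (v 1), hν (v 2), hν (v 3),
    lin_expand μ (I6 (v 0)), lin_expand μ (I6 (v 1)), lin_expand μ (I6 (v 2)),
    lin_expand μ (I6 (v 3)), lin_expand μ (v 0), lin_expand μ (v 1), lin_expand μ (v 2),
    lin_expand μ (v 3)]
  simp only [ψp, ψm, w3, E, Fin.sum_univ_six, I6a0, I6a1, I6a2, I6a3, I6a4, I6a5]
  ring

def covE (i : Fin 6) : V6 →ₗ[ℝ] ℝ := LinearMap.proj i

def wedge2 (f g : V6 →ₗ[ℝ] ℝ) : AlternatingMap ℝ V6 ℝ (Fin 2) :=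
  (Matrix.detRowAlternating : (Fin 2 → ℝ) [⋀^Fin 2]→ₗ[ℝ] ℝ).compLinearMap
    (LinearMap.pi ![f, g])

lemma wedge2_apply (f g : V6 →ₗ[ℝ] ℝ) (a b : V6) :
    wedge2 f g ![a, b] = f a * g b - f b * g a := by
  rw [wedge2, AlternatingMap.compLinearMap_apply]
  have h : (fun i => (LinearMap.pi ![f, g]) (![a, b] i) : Fin 2 → Fin 2 → ℝ)
      = !![f a, g a; f b, g b] := by
    funext i j; fin_cases i <;> fin_cases j <;> simp [LinearMap.pi_apply]
  rw [h, show Matrix.detRowAlternating (!![f a, g a; f b, g b] : Matrix (Fin 2) (Fin 2) ℝ)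
      = Matrix.det !![f a, g a; f b, g b] from rfl, Matrix.det_fin_two_of]
  ring

lemma alt2_swap (β : AlternatingMap ℝ V6 ℝ (Fin 2)) (x y : V6) : β ![y, x] = -β ![x, y] := by
  have h : (![x, y] ∘ Equiv.swap (0 : Fin 2) 1) = ![y, x] := by
    funext k; fin_cases k <;> simp
  rw [← h]
  exact AlternatingMap.map_swap β ![x, y] (by decide)

lemma alt2_diag (β : AlternatingMap ℝ V6 ℝ (Fin 2)) (x : V6) : β ![x, x] = 0 :=
  β.map_eq_zero_of_eq ![x, x] (by simp) (by decide : (0 : Fin 2) ≠ 1)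

lemma alt2_neg2 (β : AlternatingMap ℝ V6 ℝ (Fin 2)) (x y : V6) : β ![x, -y] = -β ![x, y] := by
  have h : (![x, -y] : Fin 2 → V6) = Function.update ![x, y] 1 ((-1 : ℝ) • y) := by
    funext k; fin_cases k <;> simp
  have h2 : Function.update (![x, y] : Fin 2 → V6) 1 y = ![x, y] := by
    funext k; fin_cases k <;> simp
  rw [h, AlternatingMap.map_update_smul, h2]
  simp

lemma basis_exp (x : V6) : x = ∑ i, x i • e6 i := by
  funext j
  simp [e6, Finset.sum_apply]

lemma alt2_expand (β : AlternatingMap ℝ V6 ℝ (Fin 2)) (x y : V6) :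
    β ![x, y] = ∑ i, ∑ j, x i * y j * β ![e6 i, e6 j] := by
  have h0 : (![x, y] : Fin 2 → V6) = Function.update ![x, y] 0 (∑ i, x i • e6 i) := by
    rw [← basis_exp x]; funext k; fin_cases k <;> simp
  rw [h0, AlternatingMap.map_update_sum]
  refine Finset.sum_congr rfl fun i _ => ?_
  have h1 : Function.update (![x, y] : Fin 2 → V6) 0 (x i • e6 i) = ![x i • e6 i, y] := by
    funext k; fin_cases k <;> simp
  rw [h1]
  have h2 : (![x i • e6 i, y] : Fin 2 → V6)
      = Function.update ![x i • e6 i, y] 1 (∑ j, y j • e6 j) := by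
    rw [← basis_exp y]; funext k; fin_cases k <;> simp
  rw [h2, AlternatingMap.map_update_sum]
  refine Finset.sum_congr rfl fun j _ => ?_
  have h3 : Function.update (![x i • e6 i, y] : Fin 2 → V6) 1 (y j • e6 j)
      = ![x i • e6 i, y j • e6 j] := by
    funext k; fin_cases k <;> simp
  rw [h3]
  have h4 : (![x i • e6 i, y j • e6 j] : Fin 2 → V6)
      = Function.update ![x i • e6 i, e6 j] 1 (y j • e6 j) := by
    funext k; fin_cases k <;> simp
  rw [h4, AlternatingMap.map_update_smul]
  have h5 : Function.update (![x i • e6 i, e6 j] : Fin 2 → V6) 1 (e6 j) = ![x i • e6 i, e6 j] := by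
    funext k; fin_cases k <;> simp
  have h6 : (![x i • e6 i, e6 j] : Fin 2 → V6) = Function.update ![e6 i, e6 j] 0 (x i • e6 i) := by
    funext k; fin_cases k <;> simp
  rw [h5, h6, AlternatingMap.map_update_smul]
  have h7 : Function.update (![e6 i, e6 j] : Fin 2 → V6) 0 (e6 i) = ![e6 i, e6 j] := by
    funext k; fin_cases k <;> simp
  rw [h7, smul_eq_mul, smul_eq_mul]
  ring

lemma omega_antisym : ∀ x y : V6, ω6 x y = -ω6 y x := by
  intro x y
  simp only [ω6, ip6, Fin.sum_univ_six, I6a0, I6a1, I6a2, I6a3, I6a4, I6a5]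
  ring

set_option maxHeartbeats 1000000 in
set_option maxRecDepth 4000 in
lemma u3perp_expand (β : AlternatingMap ℝ V6 ℝ (Fin 2)) (hβ : β ∈ u3perp) (x y : V6) :
    β ![x, y] =
      β ![e6 0, e6 1] * (x 0 * y 1 - x 1 * y 0 - x 3 * y 4 + x 4 * y 3)
      + β ![e6 0, e6 2] * (x 0 * y 2 - x 2 * y 0 - x 3 * y 5 + x 5 * y 3)
      + β ![e6 1, e6 2] * (x 1 * y 2 - x 2 * y 1 - x 4 * y 5 + x 5 * y 4)
      + β ![e6 0, e6 4] * (x 0 * y 4 - x 4 * y 0 - x 1 * y 3 + x 3 * y 1)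
      + β ![e6 0, e6 5] * (x 0 * y 5 - x 5 * y 0 - x 2 * y 3 + x 3 * y 2)
      + β ![e6 1, e6 5] * (x 1 * y 5 - x 5 * y 1 - x 2 * y 4 + x 4 * y 2) := by
  have r34 : β ![e6 3, e6 4] = -β ![e6 0, e6 1] := by
    have h := hβ (e6 0) (e6 1); rwa [I6e0, I6e1] at h
  have r35 : β ![e6 3, e6 5] = -β ![e6 0, e6 2] := by
    have h := hβ (e6 0) (e6 2); rwa [I6e0, I6e2] at h
  have r45 : β ![e6 4, e6 5] = -β ![e6 1, e6 2] := by
    have h := hβ (e6 1) (e6 2); rwa [I6e1, I6e2] at h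
  have r03 : β ![e6 0, e6 3] = 0 := by
    have h := hβ (e6 0) (e6 3)
    rw [I6e0, I6e3, alt2_neg2, alt2_swap β (e6 0) (e6 3)] at h
    linarith
  have r14 : β ![e6 1, e6 4] = 0 := by
    have h := hβ (e6 1) (e6 4)
    rw [I6e1, I6e4, alt2_neg2, alt2_swap β (e6 1) (e6 4)] at h
    linarith
  have r25 : β ![e6 2, e6 5] = 0 := by
    have h := hβ (e6 2) (e6 5)
    rw [I6e2, I6e5, alt2_neg2, alt2_swap β (e6 2) (e6 5)] at h
    linarith
  have r13 : β ![e6 1, e6 3] = -β ![e6 0, e6 4] := by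
    have h := hβ (e6 0) (e6 4)
    rw [I6e0, I6e4, alt2_neg2, alt2_swap β (e6 1) (e6 3)] at h
    linarith
  have r23 : β ![e6 2, e6 3] = -β ![e6 0, e6 5] := by
    have h := hβ (e6 0) (e6 5)
    rw [I6e0, I6e5, alt2_neg2, alt2_swap β (e6 2) (e6 3)] at h
    linarith
  have r24 : β ![e6 2, e6 4] = -β ![e6 1, e6 5] := by
    have h := hβ (e6 1) (e6 5)
    rw [I6e1, I6e5, alt2_neg2, alt2_swap β (e6 2) (e6 4)] at h
    linarith
  rw [alt2_expand β x y]
  simp only [Fin.sum_univ_six]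
  rw [alt2_swap β (e6 0) (e6 1), alt2_swap β (e6 0) (e6 2), alt2_swap β (e6 0) (e6 3), alt2_swap β (e6 0) (e6 4), alt2_swap β (e6 0) (e6 5), alt2_swap β (e6 1) (e6 2), alt2_swap β (e6 1) (e6 3), alt2_swap β (e6 1) (e6 4), alt2_swap β (e6 1) (e6 5), alt2_swap β (e6 2) (e6 3), alt2_swap β (e6 2) (e6 4), alt2_swap β (e6 2) (e6 5), alt2_swap β (e6 3) (e6 4), alt2_swap β (e6 3) (e6 5), alt2_swap β (e6 4) (e6 5), alt2_diag β (e6 0), alt2_diag β (e6 1), alt2_diag β (e6 2), alt2_diag β (e6 3), alt2_diag β (e6 4), alt2_diag β (e6 5), r34, r35, r45, r03, r14, r25, r13, r23, r24]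
  ring

def bof (μ : V6 →ₗ[ℝ] ℝ) : AlternatingMap ℝ V6 ℝ (Fin 2) :=
  μ (e6 2) • (wedge2 (covE 3) (covE 4) - wedge2 (covE 0) (covE 1))
  + μ (e6 1) • (wedge2 (covE 0) (covE 2) - wedge2 (covE 3) (covE 5))
  + μ (e6 0) • (wedge2 (covE 4) (covE 5) - wedge2 (covE 1) (covE 2))
  + μ (e6 5) • (wedge2 (covE 0) (covE 4) - wedge2 (covE 1) (covE 3))
  + μ (e6 4) • (wedge2 (covE 2) (covE 3) - wedge2 (covE 0) (covE 5))
  + μ (e6 3) • (wedge2 (covE 1) (covE 5) - wedge2 (covE 2) (covE 4))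

lemma bof_apply (μ : V6 →ₗ[ℝ] ℝ) (a b : V6) :
    bof μ ![a, b] =
      μ (e6 2) * ((a 3 * b 4 - b 3 * a 4) - (a 0 * b 1 - b 0 * a 1))
      + μ (e6 1) * ((a 0 * b 2 - b 0 * a 2) - (a 3 * b 5 - b 3 * a 5))
      + μ (e6 0) * ((a 4 * b 5 - b 4 * a 5) - (a 1 * b 2 - b 1 * a 2))
      + μ (e6 5) * ((a 0 * b 4 - b 0 * a 4) - (a 1 * b 3 - b 1 * a 3))
      + μ (e6 4) * ((a 2 * b 3 - b 2 * a 3) - (a 0 * b 5 - b 0 * a 5))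
      + μ (e6 3) * ((a 1 * b 5 - b 1 * a 5) - (a 2 * b 4 - b 2 * a 4)) := by
  simp only [bof, AlternatingMap.add_apply, AlternatingMap.sub_apply, AlternatingMap.smul_apply,
    wedge2_apply, covE, LinearMap.proj_apply, smul_eq_mul]

lemma bof_mem (μ : V6 →ₗ[ℝ] ℝ) : bof μ ∈ u3perp := by
  intro x y
  rw [bof_apply, bof_apply]
  simp only [I6a0, I6a1, I6a2, I6a3, I6a4, I6a5]
  ring

set_option maxHeartbeats 1000000 in
set_option maxRecDepth 4000 in
lemma ID2 (μ : V6 →ₗ[ℝ] ℝ) : w13 ⇑μ ψm = w22 (fun a b => bof μ ![a, b]) ω6 := by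
  funext v
  have hB : ∀ x y : V6, bof μ ![x, y] = -bof μ ![y, x] := fun x y => alt2_swap _ y x
  rw [w13_psim, w22_pairs _ _ hB omega_antisym]
  simp only [bof_apply]
  rw [lin_expand μ (v 0), lin_expand μ (v 1), lin_expand μ (v 2), lin_expand μ (v 3)]
  simp only [ψm, w3, E, ω6, ip6, Fin.sum_univ_six, I6a0, I6a1, I6a2, I6a3, I6a4, I6a5]
  ring

def mof (β : AlternatingMap ℝ V6 ℝ (Fin 2)) : V6 →ₗ[ℝ] ℝ :=
  (-β ![e6 1, e6 2]) • covE 0 + β ![e6 0, e6 2] • covE 1 + (-β ![e6 0, e6 1]) • covE 2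
  + β ![e6 1, e6 5] • covE 3 + (-β ![e6 0, e6 5]) • covE 4 + β ![e6 0, e6 4] • covE 5

lemma mof_apply (β : AlternatingMap ℝ V6 ℝ (Fin 2)) (x : V6) :
    mof β x = -β ![e6 1, e6 2] * x 0 + β ![e6 0, e6 2] * x 1 - β ![e6 0, e6 1] * x 2
      + β ![e6 1, e6 5] * x 3 - β ![e6 0, e6 5] * x 4 + β ![e6 0, e6 4] * x 5 := by
  simp only [mof, LinearMap.add_apply, LinearMap.smul_apply, covE, LinearMap.proj_apply,
    smul_eq_mul]
  ring

set_option maxHeartbeats 1000000 in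
set_option maxRecDepth 4000 in
lemma ID3 (β : AlternatingMap ℝ V6 ℝ (Fin 2)) (hβ : β ∈ u3perp) :
    w22 (fun a b => β ![a, b]) ω6 = w13 ⇑(mof β) ψm := by
  funext v
  have hB : ∀ x y : V6, β ![x, y] = -β ![y, x] := fun x y => alt2_swap _ y x
  rw [w22_pairs _ _ hB omega_antisym, w13_psim]
  rw [u3perp_expand β hβ (v 0) (v 1), u3perp_expand β hβ (v 0) (v 2),
    u3perp_expand β hβ (v 0) (v 3), u3perp_expand β hβ (v 1) (v 2),
    u3perp_expand β hβ (v 1) (v 3), u3perp_expand β hβ (v 2) (v 3)]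
  rw [mof_apply β (v 0), mof_apply β (v 1), mof_apply β (v 2), mof_apply β (v 3)]
  simp only [ψm, w3, E, ω6, ip6, Fin.sum_univ_six, I6a0, I6a1, I6a2, I6a3, I6a4, I6a5]
  ring

/-- `{μ ∧ ψ₊}`, `{μ ∧ ψ₋}` and `{β ∧ ω : β ∈ u(3)^⊥}` coincide as subsets of the
alternating 4-forms. -/
theorem wedge_subspaces_coincide :
    {γ : (Fin 4 → V6) → ℝ | ∃ μ : V6 →ₗ[ℝ] ℝ, γ = w13 ⇑μ ψp} =
      {γ : (Fin 4 → V6) → ℝ | ∃ μ : V6 →ₗ[ℝ] ℝ, γ = w13 ⇑μ ψm} ∧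
    {γ : (Fin 4 → V6) → ℝ | ∃ μ : V6 →ₗ[ℝ] ℝ, γ = w13 ⇑μ ψm} =
      {γ : (Fin 4 → V6) → ℝ | ∃ β ∈ u3perp, γ = w22 (fun a b => β ![a, b]) ω6} := by

  constructor
  · ext γ
    simp only [Set.mem_setOf_eq]
    constructor
    · rintro ⟨μ, rfl⟩
      refine ⟨(-μ).comp ILin, ?_⟩
      refine ID1 ((-μ).comp ILin) μ fun x => ?_
      simp only [LinearMap.comp_apply, ILin_apply, I6_I6, LinearMap.neg_apply, map_neg, neg_neg]
    · rintro ⟨μ, rfl⟩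
      exact ⟨μ.comp ILin, (ID1 μ (μ.comp ILin) fun x => rfl).symm⟩
  · ext γ
    simp only [Set.mem_setOf_eq]
    constructor
    · rintro ⟨μ, rfl⟩
      exact ⟨bof μ, bof_mem μ, ID2 μ⟩
    · rintro ⟨β, hβ, rfl⟩
      exact ⟨mof β, ID3 β hβ⟩
end
end

section
/- On ℝ⁷ with the standard G₂ 4-form ∗φ, for all vectors x, y ∈ ℝ⁷: ⟨x ⌟ ∗φ, y ⌟ ∗φ⟩ = 4⟨x, y⟩, where the inner product of two alternating 3-forms a, b is ⟨a,b⟩ = (1/3!) Σ_{i,j,k∈ℤ/7} a(e_i,e_j,e_k) b(e_i,e_j,e_k). (This is the key identity making the paper's map r̄(α)(x,y) = (1/4)⟨x⌟α, y⌟∗φ⟩ a G₂-isomorphism.) -/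
open scoped BigOperators

noncomputable section

/-- ℝ⁷ as the space of functions `Fin 7 → ℝ` (indices in ℤ/7ℤ). -/
abbrev V7 : Type := Fin 7 → ℝ

/-- The standard inner product on ℝ⁷. -/
def ip7 (x y : V7) : ℝ := ∑ i, x i * y i

/-- The standard orthonormal basis vector `e_i`. -/
def e7 (i : Fin 7) : V7 := fun j => if j = i then 1 else 0

/-- The G₂ fundamental 3-form `φ = ∑_{i∈ℤ/7} eⁱ ∧ e^{i+1} ∧ e^{i+3}`
(each wedge of covectors in the determinant convention). -/
def φ7 (x y z : V7) : ℝ :=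
  ∑ i : Fin 7,
    (x i * y (i + 1) * z (i + 3) - x i * y (i + 3) * z (i + 1)
      - x (i + 1) * y i * z (i + 3) + x (i + 1) * y (i + 3) * z i
      + x (i + 3) * y i * z (i + 1) - x (i + 3) * y (i + 1) * z i)

/-- The 4-form `∗φ = −∑_{i∈ℤ/7} e^{i+2} ∧ e^{i+4} ∧ e^{i+5} ∧ e^{i+6}`. -/
def sφ7 (x y z u : V7) : ℝ :=
  -∑ i : Fin 7,
    Matrix.det !![x (i + 2), x (i + 4), x (i + 5), x (i + 6);
                  y (i + 2), y (i + 4), y (i + 5), y (i + 6);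
                  z (i + 2), z (i + 4), z (i + 5), z (i + 6);
                  u (i + 2), u (i + 4), u (i + 5), u (i + 6)]

/-- Explicit expansion of a 4×4 determinant. -/
def d4 {R : Type*} [CommRing R] (a b c d e f g h i j k l m n o p : R) : R :=
  a*(f*(k*p-l*o) - g*(j*p-l*n) + h*(j*o-k*n))
  - b*(e*(k*p-l*o) - g*(i*p-l*m) + h*(i*o-k*m))
  + c*(e*(j*p-l*n) - f*(i*p-l*m) + h*(i*n-j*m))
  - d*(e*(j*o-k*n) - f*(i*o-k*m) + g*(i*n-j*m))

lemma det4 (a b c d e f g h i j k l m n o p : ℝ) :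
    Matrix.det !![a,b,c,d; e,f,g,h; i,j,k,l; m,n,o,p] = d4 a b c d e f g h i j k l m n o p := by
  have h1 : ∀ (w x y z : ℝ), ![w,x,y,z] (Fin.succAbove 2 2) = z := fun _ _ _ _ => rfl
  have h2 : ∀ (w x y z : ℝ), ![w,x,y,z] (Fin.succAbove 1 2) = z := fun _ _ _ _ => rfl
  have h3 : ∀ (w x y z : ℝ), ![w,x,y,z] (Fin.castSucc 2) = y := fun _ _ _ _ => rfl
  have h4 : ∀ (w x y z : ℝ), ![w,x,y,z] (Fin.succAbove 3 2) = y := fun _ _ _ _ => rfl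
  simp [Matrix.det_succ_row_zero, Fin.sum_univ_succ, d4, h1, h2, h3, h4]
  ring

/-- Integer entries of the basis vectors. -/
def E7 (a i : Fin 7) : ℤ := if i = a then 1 else 0

/-- `sφ7` evaluated on four basis vectors, as an integer. -/
def sZ (a i j k : Fin 7) : ℤ :=
  -∑ m : Fin 7,
    d4 (E7 a (m+2)) (E7 a (m+4)) (E7 a (m+5)) (E7 a (m+6))
       (E7 i (m+2)) (E7 i (m+4)) (E7 i (m+5)) (E7 i (m+6))
       (E7 j (m+2)) (E7 j (m+4)) (E7 j (m+5)) (E7 j (m+6))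
       (E7 k (m+2)) (E7 k (m+4)) (E7 k (m+5)) (E7 k (m+6))

set_option maxHeartbeats 8000000 in
lemma key : ∀ a b : Fin 7,
    (∑ i : Fin 7, ∑ j : Fin 7, ∑ k : Fin 7, sZ a i j k * sZ b i j k)
      = if a = b then 24 else 0 := by
  decide

lemma sφ7_basis (a i j k : Fin 7) :
    sφ7 (e7 a) (e7 i) (e7 j) (e7 k) = (sZ a i j k : ℝ) := by
  simp only [sφ7, det4, sZ, Int.cast_neg, Int.cast_sum]
  congr 1
  refine Finset.sum_congr rfl fun m _ => ?_
  simp only [d4, e7, E7]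
  push_cast [apply_ite (Int.cast : ℤ → ℝ)]
  ring

lemma sφ7_add (v w y z u : V7) :
    sφ7 (fun t => v t + w t) y z u = sφ7 v y z u + sφ7 w y z u := by
  simp only [sφ7, det4]
  rw [← neg_add, ← Finset.sum_add_distrib]
  congr 1
  refine Finset.sum_congr rfl fun m _ => ?_
  simp only [d4]; ring

lemma sφ7_smul (c : ℝ) (v y z u : V7) :
    sφ7 (fun t => c * v t) y z u = c * sφ7 v y z u := by
  simp only [sφ7, det4]
  rw [mul_neg, Finset.mul_sum]
  congr 1
  refine Finset.sum_congr rfl fun m _ => ?_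
  simp only [d4]; ring

lemma sφ7_zero (y z u : V7) : sφ7 (fun _ => 0) y z u = 0 := by
  have := sφ7_smul 0 (fun _ => (0:ℝ)) y z u
  simpa using this

lemma sφ7_expand (x y z u : V7) :
    sφ7 x y z u = ∑ a : Fin 7, x a * sφ7 (e7 a) y z u := by
  have h : ∀ (s : Finset (Fin 7)),
      sφ7 (fun t => ∑ a ∈ s, x a * e7 a t) y z u
        = ∑ a ∈ s, x a * sφ7 (e7 a) y z u := by
    intro s
    induction s using Finset.induction with
    | empty => simpa using sφ7_zero y z u
    | insert b s' hni ih =>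
        rw [Finset.sum_insert hni]
        have heq : (fun t => ∑ a ∈ insert b s', x a * e7 a t)
            = fun t => x b * e7 b t + ∑ a ∈ s', x a * e7 a t := by
          funext t; rw [Finset.sum_insert hni]
        rw [heq, sφ7_add, ih, sφ7_smul]
  have hx : x = fun t => ∑ a : Fin 7, x a * e7 a t := by
    funext t
    simp [e7, mul_ite, Finset.sum_ite_eq]
  conv_lhs => rw [hx]
  exact h Finset.univ

lemma sum_swap5 (f : Fin 7 → Fin 7 → Fin 7 → Fin 7 → Fin 7 → ℝ) :
    ∑ i : Fin 7, ∑ j : Fin 7, ∑ k : Fin 7, ∑ a : Fin 7, ∑ b : Fin 7, f i j k a b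
      = ∑ a : Fin 7, ∑ b : Fin 7, ∑ i : Fin 7, ∑ j : Fin 7, ∑ k : Fin 7, f i j k a b :=
  calc
    ∑ i : Fin 7, ∑ j : Fin 7, ∑ k : Fin 7, ∑ a : Fin 7, ∑ b : Fin 7, f i j k a b
      = ∑ i : Fin 7, ∑ j : Fin 7, ∑ a : Fin 7, ∑ k : Fin 7, ∑ b : Fin 7, f i j k a b :=
        Finset.sum_congr rfl fun i _ => Finset.sum_congr rfl fun j _ => Finset.sum_comm
    _ = ∑ i : Fin 7, ∑ a : Fin 7, ∑ j : Fin 7, ∑ k : Fin 7, ∑ b : Fin 7, f i j k a b :=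
        Finset.sum_congr rfl fun i _ => Finset.sum_comm
    _ = ∑ a : Fin 7, ∑ i : Fin 7, ∑ j : Fin 7, ∑ k : Fin 7, ∑ b : Fin 7, f i j k a b :=
        Finset.sum_comm
    _ = ∑ a : Fin 7, ∑ i : Fin 7, ∑ j : Fin 7, ∑ b : Fin 7, ∑ k : Fin 7, f i j k a b :=
        Finset.sum_congr rfl fun a _ => Finset.sum_congr rfl fun i _ =>
          Finset.sum_congr rfl fun j _ => Finset.sum_comm
    _ = ∑ a : Fin 7, ∑ i : Fin 7, ∑ b : Fin 7, ∑ j : Fin 7, ∑ k : Fin 7, f i j k a b :=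
        Finset.sum_congr rfl fun a _ => Finset.sum_congr rfl fun i _ => Finset.sum_comm
    _ = ∑ a : Fin 7, ∑ b : Fin 7, ∑ i : Fin 7, ∑ j : Fin 7, ∑ k : Fin 7, f i j k a b :=
        Finset.sum_congr rfl fun a _ => Finset.sum_comm

/-- `⟨x ⌟ ∗φ, y ⌟ ∗φ⟩ = 4⟨x,y⟩`, where the inner product of 3-forms `a, b` is
`(1/3!) ∑_{i,j,k} a(e_i,e_j,e_k) b(e_i,e_j,e_k)`. -/
theorem inner_interior_star_phi :
    ∀ x y : V7,
      (1 / 6 : ℝ) * ∑ i : Fin 7, ∑ j : Fin 7, ∑ k : Fin 7,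
          sφ7 x (e7 i) (e7 j) (e7 k) * sφ7 y (e7 i) (e7 j) (e7 k)
        = 4 * ip7 x y := by
  intro x y
  have hexp : ∀ i j k : Fin 7,
      sφ7 x (e7 i) (e7 j) (e7 k) * sφ7 y (e7 i) (e7 j) (e7 k)
        = ∑ a : Fin 7, ∑ b : Fin 7,
            x a * y b * ((sZ a i j k : ℝ) * (sZ b i j k : ℝ)) := by
    intro i j k
    rw [sφ7_expand x, sφ7_expand y]
    simp only [sφ7_basis]
    rw [Finset.sum_mul_sum]
    refine Finset.sum_congr rfl fun a _ => Finset.sum_congr rfl fun b _ => ?_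
    ring
  simp only [hexp]
  rw [sum_swap5]
  have hab : ∀ a b : Fin 7,
      (∑ i : Fin 7, ∑ j : Fin 7, ∑ k : Fin 7, (sZ a i j k : ℝ) * (sZ b i j k : ℝ))
        = if a = b then 24 else 0 := by
    intro a b
    have h1 : (∑ i : Fin 7, ∑ j : Fin 7, ∑ k : Fin 7, (sZ a i j k : ℝ) * (sZ b i j k : ℝ))
        = ((∑ i : Fin 7, ∑ j : Fin 7, ∑ k : Fin 7, sZ a i j k * sZ b i j k : ℤ) : ℝ) := by
      push_cast; rfl
    rw [h1, key a b]
    simp [apply_ite (Int.cast : ℤ → ℝ)]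
  have h2 : ∀ a b : Fin 7,
      (∑ i : Fin 7, ∑ j : Fin 7, ∑ k : Fin 7,
        x a * y b * ((sZ a i j k : ℝ) * (sZ b i j k : ℝ)))
      = x a * y b * (if a = b then (24:ℝ) else 0) := by
    intro a b
    rw [← hab a b]
    simp only [Finset.mul_sum]
  simp only [h2, mul_ite, mul_zero]
  rw [Finset.sum_congr rfl fun a (_ : a ∈ (Finset.univ : Finset (Fin 7))) =>
    Finset.sum_ite_eq (Finset.univ : Finset (Fin 7)) a (fun b => x a * y b * 24)]
  simp only [Finset.mem_univ, if_true, ip7, Finset.mul_sum]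
  refine Finset.sum_congr rfl fun a _ => ?_
  ring
end
end
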